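/- Let μ = (μ₁,…,μ_{2n}) and μ' = (μ'₁,…,μ'_{2n}) be weakly decreasing rational tuples both satisfying the symplectic symmetry μ_i + μ_{2n+1−i} constant and μ'_i + μ'_{2n+1−i} constant. Then μ ≤ μ' in the dominance order for GL_{2n} (all partial sums of μ bounded by those of μ', total sums equal) if and only if μ ≤ μ' in the dominance order for GSp_{2n} (μ' − μ is a nonnegative rational combination of the positive coroots of GSp_{2n}). -/
import Mathlib


/-- Partial sum of the first `k` entries. -/
def partialSum2n (n : ℕ) (μ : Fin (2 * n) → ℚ) (k : ℕ) : ℚ :=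
  ∑ i ∈ Finset.univ.filter (fun i : Fin (2 * n) => i.val < k), μ i

/-- Indicator vector `e_i` in `ℚ^{2n}` evaluated at `k`, for an index given by a
natural number. -/
def ind (n : ℕ) (i : ℕ) (k : Fin (2 * n)) : ℚ := if k.val = i then 1 else 0

/-- The positive coroot of `GSp_{2n}` attached to the root `x_i − x_j` (`i < j ≤ n`),
embedded in the cocharacter space of `GL_{2n}`: `e_i − e_j − e_{2n+1−i} + e_{2n+1−j}`
(0-indexed mirror `2n−1−i`). -/
def corootA (n : ℕ) (i j : ℕ) (k : Fin (2 * n)) : ℚ :=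
  ind n i k - ind n j k - ind n (2 * n - 1 - i) k + ind n (2 * n - 1 - j) k

/-- The positive coroot attached to the root `x_i + x_j − sim` (`i < j ≤ n`):
`e_i + e_j − e_{2n+1−i} − e_{2n+1−j}`. -/
def corootB (n : ℕ) (i j : ℕ) (k : Fin (2 * n)) : ℚ :=
  ind n i k + ind n j k - ind n (2 * n - 1 - i) k - ind n (2 * n - 1 - j) k

/-- The positive coroot attached to the long root `2x_i − sim` (`i ≤ n`):
`e_i − e_{2n+1−i}`. -/
def corootC (n : ℕ) (i : ℕ) (k : Fin (2 * n)) : ℚ :=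
  ind n i k - ind n (2 * n - 1 - i) k

-- generic pick lemmas
lemma sum_pick_none (N : ℕ) (P : ℕ → Prop) [DecidablePred P] (f : ℕ → ℚ)
    (h : ∀ i < N, ¬ P i) : (∑ i ∈ Finset.range N, if P i then f i else 0) = 0 :=
  Finset.sum_eq_zero (fun i hi => if_neg (h i (Finset.mem_range.mp hi)))

lemma sum_pick_single (N : ℕ) (P : ℕ → Prop) [DecidablePred P] (f : ℕ → ℚ) (i₀ : ℕ)
    (h₀ : i₀ < N) (hP : P i₀) (huniq : ∀ i < N, P i → i = i₀) :
    (∑ i ∈ Finset.range N, if P i then f i else 0) = f i₀ := by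
  rw [Finset.sum_eq_single i₀]
  · rw [if_pos hP]
  · intro b hb hne
    exact if_neg (fun hPb => hne (huniq b (Finset.mem_range.mp hb) hPb))
  · intro h; exact absurd (Finset.mem_range.mpr h₀) h

lemma psum_ind (n i m : ℕ) (hi : i < 2 * n) (hm : m ≤ 2 * n) :
    partialSum2n n (ind n i) m = if i < m then 1 else 0 := by
  unfold partialSum2n ind
  rw [Finset.sum_filter, Fin.sum_univ_eq_sum_range
    (fun kv => if kv < m then (if kv = i then (1:ℚ) else 0) else 0)]
  have : ∀ kv, (if kv < m then (if kv = i then (1:ℚ) else 0) else 0)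
      = if (kv = i ∧ i < m) then 1 else 0 := by
    intro kv; split_ifs with h1 h2 h3 h4 <;> simp_all <;> omega
  rw [Finset.sum_congr rfl (fun kv _ => this kv)]
  by_cases him : i < m
  · rw [sum_pick_single (2*n) _ _ i hi ⟨rfl, him⟩ (fun j _ hj => hj.1), if_pos him]
  · rw [sum_pick_none, if_neg him]
    intro j hj hPj; exact him hPj.2

lemma psum_sub (n : ℕ) (f g : Fin (2*n) → ℚ) (m : ℕ) :
    partialSum2n n (fun k => f k - g k) m = partialSum2n n f m - partialSum2n n g m := by
  unfold partialSum2n; rw [Finset.sum_sub_distrib]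

lemma psum_succ (n : ℕ) (f : Fin (2*n) → ℚ) (k : Fin (2*n)) :
    partialSum2n n f (k.val+1) = partialSum2n n f k.val + f k := by
  unfold partialSum2n
  rw [show (Finset.univ.filter (fun i : Fin (2*n) => i.val < k.val+1))
      = insert k (Finset.univ.filter (fun i : Fin (2*n) => i.val < k.val)) from ?_,
    Finset.sum_insert (by simp)]
  · ring
  · ext i; simp [Fin.ext_iff]; omega


lemma psum_add (n : ℕ) (f g : Fin (2*n) → ℚ) (m : ℕ) :
    partialSum2n n (fun k => f k + g k) m = partialSum2n n f m + partialSum2n n g m := by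
  unfold partialSum2n; rw [Finset.sum_add_distrib]

lemma psum_corootA (n i j m : ℕ) (hij : i < j) (hj : j < n) (hm : m ≤ 2*n) :
    partialSum2n n (corootA n i j) m
    = (if i < m then 1 else 0) - (if j < m then 1 else 0)
      - (if 2*n-1-i < m then 1 else 0) + (if 2*n-1-j < m then 1 else 0) := by
  show partialSum2n n (fun k => (fun k => (fun k => ind n i k - ind n j k) k - ind n (2*n-1-i) k) k + ind n (2*n-1-j) k) m = _
  rw [psum_add, psum_sub, psum_sub,
      psum_ind n i m (by omega) hm, psum_ind n j m (by omega) hm,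
      psum_ind n (2*n-1-i) m (by omega) hm, psum_ind n (2*n-1-j) m (by omega) hm]
lemma psum_corootA_nonneg (n i j m : ℕ) (hij : i < j) (hj : j < n) (hm : m ≤ 2*n) :
    0 ≤ partialSum2n n (corootA n i j) m := by
  rw [psum_corootA n i j m hij hj hm]
  split_ifs <;> norm_num <;> omega

lemma psum_corootA_total (n i j : ℕ) (hij : i < j) (hj : j < n) :
    partialSum2n n (corootA n i j) (2*n) = 0 := by
  rw [psum_corootA n i j (2*n) hij hj le_rfl]
  split_ifs <;> norm_num <;> omega

lemma psum_corootB (n i j m : ℕ) (hij : i < j) (hj : j < n) (hm : m ≤ 2*n) :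
    partialSum2n n (corootB n i j) m
    = (if i < m then 1 else 0) + (if j < m then 1 else 0)
      - (if 2*n-1-i < m then 1 else 0) - (if 2*n-1-j < m then 1 else 0) := by
  show partialSum2n n (fun k => (fun k => (fun k => ind n i k + ind n j k) k - ind n (2*n-1-i) k) k - ind n (2*n-1-j) k) m = _
  rw [psum_sub, psum_sub, psum_add,
      psum_ind n i m (by omega) hm, psum_ind n j m (by omega) hm,
      psum_ind n (2*n-1-i) m (by omega) hm, psum_ind n (2*n-1-j) m (by omega) hm]

lemma psum_corootB_nonneg (n i j m : ℕ) (hij : i < j) (hj : j < n) (hm : m ≤ 2*n) :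
    0 ≤ partialSum2n n (corootB n i j) m := by
  rw [psum_corootB n i j m hij hj hm]
  split_ifs <;> norm_num <;> omega

lemma psum_corootB_total (n i j : ℕ) (hij : i < j) (hj : j < n) :
    partialSum2n n (corootB n i j) (2*n) = 0 := by
  rw [psum_corootB n i j (2*n) hij hj le_rfl]
  split_ifs <;> norm_num <;> omega

lemma psum_corootC (n i m : ℕ) (hi : i < n) (hm : m ≤ 2*n) :
    partialSum2n n (corootC n i) m
    = (if i < m then 1 else 0) - (if 2*n-1-i < m then 1 else 0) := by
  show partialSum2n n (fun k => ind n i k - ind n (2*n-1-i) k) m = _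
  rw [psum_sub, psum_ind n i m (by omega) hm, psum_ind n (2*n-1-i) m (by omega) hm]

lemma psum_corootC_nonneg (n i m : ℕ) (hi : i < n) (hm : m ≤ 2*n) :
    0 ≤ partialSum2n n (corootC n i) m := by
  rw [psum_corootC n i m hi hm]
  split_ifs <;> norm_num <;> omega

lemma psum_corootC_total (n i : ℕ) (hi : i < n) :
    partialSum2n n (corootC n i) (2*n) = 0 := by
  rw [psum_corootC n i (2*n) hi le_rfl]
  split_ifs <;> norm_num <;> omega

lemma psum_decomp (n : ℕ) (a b : Fin n → Fin n → ℚ) (d : Fin n → ℚ) (m : ℕ) :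
    partialSum2n n (fun k =>
      (∑ i : Fin n, ∑ j : Fin n, if i < j then a i j * corootA n i.val j.val k else 0) +
      (∑ i : Fin n, ∑ j : Fin n, if i < j then b i j * corootB n i.val j.val k else 0) +
      (∑ i : Fin n, d i * corootC n i.val k)) m
    = (∑ i : Fin n, ∑ j : Fin n, if i < j then a i j * partialSum2n n (corootA n i.val j.val) m else 0)
    + (∑ i : Fin n, ∑ j : Fin n, if i < j then b i j * partialSum2n n (corootB n i.val j.val) m else 0)
    + (∑ i : Fin n, d i * partialSum2n n (corootC n i.val) m) := by
  unfold partialSum2n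
  rw [Finset.sum_add_distrib, Finset.sum_add_distrib]
  congr 1
  · congr 1
    · rw [Finset.sum_comm]
      refine Finset.sum_congr rfl (fun i _ => ?_)
      rw [Finset.sum_comm]
      refine Finset.sum_congr rfl (fun j _ => ?_)
      by_cases h : i < j
      · simp only [if_pos h, Finset.mul_sum]
      · simp only [if_neg h, Finset.sum_const_zero]
    · rw [Finset.sum_comm]
      refine Finset.sum_congr rfl (fun i _ => ?_)
      rw [Finset.sum_comm]
      refine Finset.sum_congr rfl (fun j _ => ?_)
      by_cases h : i < j
      · simp only [if_pos h, Finset.mul_sum]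
      · simp only [if_neg h, Finset.sum_const_zero]
  · rw [Finset.sum_comm]
    refine Finset.sum_congr rfl (fun i _ => ?_)
    rw [Finset.mul_sum]

lemma psum_zero (n : ℕ) (f : Fin (2*n) → ℚ) : partialSum2n n f 0 = 0 := by
  unfold partialSum2n; simp

lemma crux (n : ℕ) (hn : 0 < n) (ν : Fin (2*n) → ℚ)
    (hrev : ∀ m, m ≤ 2*n → partialSum2n n ν (2*n-m) = partialSum2n n ν m)
    (k : Fin (2*n)) :
    ν k =
      (∑ i : Fin n, ∑ j : Fin n, if i < j then
          (if j.val = i.val+1 then partialSum2n n ν (i.val+1) else 0) * corootA n i.val j.val k else 0) +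
      (∑ i : Fin n, ∑ j : Fin n, if i < j then (0:ℚ) * corootB n i.val j.val k else 0) +
      (∑ i : Fin n, (if i.val = n-1 then partialSum2n n ν n else 0) * corootC n i.val k) := by
  set S : ℕ → ℚ := fun m => partialSum2n n ν m with hS
  have hS0 : S 0 = 0 := psum_zero n ν
  have htot : S (2*n) = 0 := by
    have h := hrev 0 (by omega)
    simp only [Nat.sub_zero] at h
    show partialSum2n n ν (2*n) = 0
    rw [h]; exact psum_zero n ν
  set t := k.val with ht
  have htlt : t < 2*n := k.isLt
  -- middle sum is zero
  have hmid : (∑ i : Fin n, ∑ j : Fin n, if i < j then (0:ℚ) * corootB n i.val j.val k else 0) = 0 := by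
    simp
  -- inner sum for the a-part
  have hinner : ∀ i : Fin n,
      (∑ j : Fin n, if i < j then
          (if j.val = i.val+1 then S (i.val+1) else 0) * corootA n i.val j.val k else 0)
      = if i.val+1 < n then S (i.val+1) * corootA n i.val (i.val+1) k else 0 := by
    intro i
    have hcongr : ∀ j : Fin n,
        (if i < j then (if j.val = i.val+1 then S (i.val+1) else 0) * corootA n i.val j.val k else 0)
        = if j.val = i.val+1 then S (i.val+1) * corootA n i.val j.val k else 0 := by
      intro j
      by_cases hj : j.val = i.val + 1
      · rw [if_pos hj, if_pos hj, if_pos (show i < j from by rw [Fin.lt_def]; omega)]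
      · rw [if_neg hj]
        split_ifs with h1
        · rw [zero_mul]
        · rfl
    rw [Finset.sum_congr rfl (fun j _ => hcongr j)]
    rw [Fin.sum_univ_eq_sum_range
      (fun jv => if jv = i.val+1 then S (i.val+1) * corootA n i.val jv k else 0) n]
    by_cases h : i.val + 1 < n
    · rw [if_pos h, sum_pick_single n (fun jv => jv = i.val+1) (fun jv => S (i.val+1) * corootA n i.val jv k) (i.val+1) h rfl (fun j _ hj => hj)]
    · rw [if_neg h, sum_pick_none]
      intro jv hjv hP; omega
  rw [Finset.sum_congr rfl (fun i _ => hinner i), hmid]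
  -- the d-part
  have hd : (∑ i : Fin n, (if i.val = n-1 then S n else 0) * corootC n i.val k)
      = S n * corootC n (n-1) k := by
    have : ∀ i : Fin n, (if i.val = n-1 then S n else 0) * corootC n i.val k
        = if i.val = n-1 then S n * corootC n i.val k else 0 := by
      intro i; split_ifs <;> simp
    rw [Finset.sum_congr rfl (fun i _ => this i)]
    rw [Fin.sum_univ_eq_sum_range (fun iv => if iv = n-1 then S n * corootC n iv k else 0) n]
    rw [sum_pick_single n (fun iv => iv = n-1) (fun iv => S n * corootC n iv k) (n-1) (by omega) rfl (fun j _ hj => hj)]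
  rw [hd]
  rw [Fin.sum_univ_eq_sum_range
    (fun iv => if iv+1 < n then S (iv+1) * corootA n iv (iv+1) k else 0) n]
  -- split the corootA sum into four indicator sums
  have hsplit : ∀ iv, (if iv+1 < n then S (iv+1) * corootA n iv (iv+1) k else 0)
      = ((if iv+1 < n ∧ t = iv then S (iv+1) else 0)
        - (if iv+1 < n ∧ t = iv+1 then S (iv+1) else 0)
        - (if iv+1 < n ∧ t = 2*n-1-iv then S (iv+1) else 0))
        + (if iv+1 < n ∧ t = 2*n-1-(iv+1) then S (iv+1) else 0) := by
    intro iv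
    unfold corootA ind
    rw [← ht]
    split_ifs <;> first | omega | ring
  rw [Finset.sum_congr rfl (fun iv _ => hsplit iv), Finset.sum_add_distrib,
    Finset.sum_sub_distrib, Finset.sum_sub_distrib]
  -- closed forms of the four sums
  have hw : (∑ iv ∈ Finset.range n, if iv+1 < n ∧ t = iv then S (iv+1) else 0)
      = if t+1 < n then S (t+1) else 0 := by
    by_cases h : t+1 < n
    · rw [if_pos h, sum_pick_single n _ _ t (by omega) ⟨h, rfl⟩ (fun j _ hj => hj.2.symm)]
    · rw [if_neg h, sum_pick_none]
      intro iv hiv hP; omega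
  have hx : (∑ iv ∈ Finset.range n, if iv+1 < n ∧ t = iv+1 then S (iv+1) else 0)
      = if t < n then S t else 0 := by
    by_cases h : 0 < t ∧ t < n
    · rw [if_pos h.2, sum_pick_single n _ _ (t-1) (by omega) ⟨by omega, by omega⟩
        (fun j _ hj => by omega)]
      congr 1; omega
    · rw [sum_pick_none n _ _ (fun iv hiv hP => by omega)]
      by_cases h0 : t < n
      · rw [if_pos h0]
        have : t = 0 := by omega
        rw [this, hS0]
      · rw [if_neg h0]
  have hy : (∑ iv ∈ Finset.range n, if iv+1 < n ∧ t = 2*n-1-iv then S (iv+1) else 0)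
      = if n < t then S t else 0 := by
    by_cases h : n < t
    · rw [if_pos h, sum_pick_single n _ _ (2*n-1-t) (by omega) ⟨by omega, by omega⟩
        (fun j _ hj => by omega)]
      rw [show 2*n-1-t+1 = 2*n-t from by omega]
      exact hrev t (by omega)
    · rw [if_neg h, sum_pick_none]
      intro iv hiv hP; omega
  have hz : (∑ iv ∈ Finset.range n, if iv+1 < n ∧ t = 2*n-1-(iv+1) then S (iv+1) else 0)
      = if n ≤ t ∧ t < 2*n-1 then S (t+1) else 0 := by
    by_cases h : n ≤ t ∧ t < 2*n-1
    · rw [if_pos h, sum_pick_single n _ _ (2*n-2-t) (by omega) ⟨by omega, by omega⟩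
        (fun j _ hj => by omega)]
      rw [show 2*n-2-t+1 = 2*n-(t+1) from by omega]
      exact hrev (t+1) (by omega)
    · rw [if_neg h, sum_pick_none]
      intro iv hiv hP; omega
  rw [hw, hx, hy, hz]
  -- closed form of the corootC term
  have hc : S n * corootC n (n-1) k
      = (if t = n-1 then S (t+1) else 0) - (if t = n then S t else 0) := by
    unfold corootC ind
    rw [← ht, show 2*n-1-(n-1) = n from by omega]
    by_cases h1 : t = n-1
    · rw [if_pos h1, if_pos h1, if_neg (by omega), if_neg (by omega),
        show t+1 = n from by omega]
      ring
    · rw [if_neg h1, if_neg h1]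
      by_cases h2 : t = n
      · rw [if_pos h2, if_pos h2, h2]; ring
      · rw [if_neg h2, if_neg h2]; ring
  rw [hc]
  -- ν k = S (t+1) - S t
  have hnu : ν k = S (t+1) - S t := by
    rw [hS]
    have := psum_succ n ν k
    rw [← ht] at this
    linarith [this]
  rw [hnu]
  -- final case analysis
  rcases eq_or_lt_of_le (show t+1 ≤ 2*n from by omega) with hlast | hlast
  · have hS1 : S (t+1) = 0 := by rw [hlast]; exact htot
    split_ifs <;> first | omega | linarith [hS1]
  · split_ifs <;> first | omega | linarith

lemma psum_total (n : ℕ) (f : Fin (2*n) → ℚ) : partialSum2n n f (2*n) = ∑ i, f i := by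
  unfold partialSum2n
  congr 1
  ext i; simp [i.isLt]

lemma rev_psum (n m : ℕ) (hm : m ≤ 2*n) (ν : Fin (2*n) → ℚ)
    (hν : ∀ i, ν i + ν i.rev = 0) (htot : partialSum2n n ν (2*n) = 0) :
    partialSum2n n ν (2*n - m) = partialSum2n n ν m := by
  have hsplit := Finset.sum_filter_add_sum_filter_not Finset.univ
    (fun i : Fin (2*n) => i.val < 2*n - m) ν
  have htot' : partialSum2n n ν (2*n)
      = ∑ i ∈ Finset.univ.filter (fun i : Fin (2*n) => i.val < 2*n - m), ν i
        + ∑ i ∈ Finset.univ.filter (fun i : Fin (2*n) => ¬ i.val < 2*n - m), ν i := by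
    rw [psum_total, ← hsplit]
  have hbij : ∑ i ∈ Finset.univ.filter (fun i : Fin (2*n) => ¬ i.val < 2*n - m), ν i
      = ∑ i ∈ Finset.univ.filter (fun i : Fin (2*n) => i.val < m), ν i.rev := by
    refine Finset.sum_nbij' (i := fun x => Fin.rev x) (j := fun x => Fin.rev x) ?_ ?_ ?_ ?_ ?_
    · intro a ha
      simp only [Finset.mem_filter, Finset.mem_univ, true_and] at ha ⊢
      rw [Fin.val_rev]
      omega
    · intro a ha
      simp only [Finset.mem_filter, Finset.mem_univ, true_and] at ha ⊢
      rw [Fin.val_rev]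
      omega
    · intro a _; exact Fin.rev_rev a
    · intro a _; exact Fin.rev_rev a
    · intro a _; rw [Fin.rev_rev]
  have hneg : ∑ i ∈ Finset.univ.filter (fun i : Fin (2*n) => i.val < m), ν i.rev
      = - partialSum2n n ν m := by
    unfold partialSum2n
    rw [← Finset.sum_neg_distrib]
    refine Finset.sum_congr rfl (fun i _ => ?_)
    have := hν i; linarith
  have : partialSum2n n ν (2*n-m) = ∑ i ∈ Finset.univ.filter (fun i : Fin (2*n) => i.val < 2*n - m), ν i := rfl
  rw [htot] at htot'
  rw [this]
  rw [hbij, hneg] at htot'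
  linarith


/-- For symplectically symmetric weakly decreasing tuples, the
dominance order of `GL_{2n}` (partial sums bounded, total sums equal) agrees with
the dominance order of `GSp_{2n}` (difference a nonnegative rational combination of
the positive coroots of `GSp_{2n}`). -/
theorem stmt_7 (n : ℕ) (μ μ' : Fin (2 * n) → ℚ) (hμ : Antitone μ) (hμ' : Antitone μ')
    (c c' : ℚ) (hsym : ∀ i, μ i + μ i.rev = c) (hsym' : ∀ i, μ' i + μ' i.rev = c') :
    ((∀ k : ℕ, k ≤ 2 * n → partialSum2n n μ k ≤ partialSum2n n μ' k) ∧
      partialSum2n n μ (2 * n) = partialSum2n n μ' (2 * n))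
    ↔ (∃ (a b : Fin n → Fin n → ℚ) (d : Fin n → ℚ),
        (∀ i j, 0 ≤ a i j) ∧ (∀ i j, 0 ≤ b i j) ∧ (∀ i, 0 ≤ d i) ∧
        ∀ k : Fin (2 * n), μ' k - μ k =
          (∑ i : Fin n, ∑ j : Fin n, if i < j then a i j * corootA n i.val j.val k else 0) +
          (∑ i : Fin n, ∑ j : Fin n, if i < j then b i j * corootB n i.val j.val k else 0) +
          (∑ i : Fin n, d i * corootC n i.val k)) := by
  rcases Nat.eq_zero_or_pos n with rfl | hn
  · constructor
    · intro _
      exact ⟨0, 0, 0, fun i => i.elim0, fun i => i.elim0, fun i => i.elim0,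
        fun k => k.elim0⟩
    · intro _
      refine ⟨fun k hk => ?_, rfl⟩
      have : k = 0 := by omega
      subst this
      exact le_refl _
  constructor
  · rintro ⟨hle, heq⟩
    set ν : Fin (2*n) → ℚ := fun k => μ' k - μ k with hνdef
    have hSnonneg : ∀ m, m ≤ 2*n → 0 ≤ partialSum2n n ν m := by
      intro m hm
      rw [psum_sub]
      linarith [hle m hm]
    have htot : partialSum2n n ν (2*n) = 0 := by
      rw [psum_sub]; linarith
    -- c = c'
    have hsum_rev : ∀ f : Fin (2*n) → ℚ, ∑ i, f (Fin.rev i) = ∑ i, f i :=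
      fun f => Fintype.sum_equiv Fin.revPerm (fun i => f (Fin.rev i)) f (fun i => rfl)
    have h2c : (2:ℚ) * (∑ i, μ i) = (2*(n:ℚ)) * c := by
      calc (2:ℚ) * ∑ i, μ i = ∑ i, μ i + ∑ i, μ (Fin.rev i) := by rw [hsum_rev]; ring
        _ = ∑ i : Fin (2*n), (μ i + μ i.rev) := by rw [Finset.sum_add_distrib]
        _ = ∑ _i : Fin (2*n), c := Finset.sum_congr rfl (fun i _ => hsym i)
        _ = (2*(n:ℚ)) * c := by
            rw [Finset.sum_const, Finset.card_univ, Fintype.card_fin]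
            push_cast
            ring
    have h2c' : (2:ℚ) * (∑ i, μ' i) = (2*(n:ℚ)) * c' := by
      calc (2:ℚ) * ∑ i, μ' i = ∑ i, μ' i + ∑ i, μ' (Fin.rev i) := by rw [hsum_rev]; ring
        _ = ∑ i : Fin (2*n), (μ' i + μ' i.rev) := by rw [Finset.sum_add_distrib]
        _ = ∑ _i : Fin (2*n), c' := Finset.sum_congr rfl (fun i _ => hsym' i)
        _ = (2*(n:ℚ)) * c' := by
            rw [Finset.sum_const, Finset.card_univ, Fintype.card_fin]
            push_cast
            ring
    have hsums : (∑ i, μ i) = ∑ i, μ' i := by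
      rw [← psum_total, ← psum_total]; exact heq
    have hcc : c = c' := by
      have hne : (2*(n:ℚ)) ≠ 0 := by
        have : (n:ℚ) ≠ 0 := Nat.cast_ne_zero.mpr (by omega)
        positivity
      exact mul_left_cancel₀ hne (by linarith)
    have hν : ∀ i, ν i + ν i.rev = 0 := by
      intro i
      have h1 := hsym i
      have h2 := hsym' i
      simp only [hνdef]
      linarith
    have hrev : ∀ m, m ≤ 2*n → partialSum2n n ν (2*n-m) = partialSum2n n ν m :=
      fun m hm => rev_psum n m hm ν hν htot
    refine ⟨fun i j => if j.val = i.val+1 then partialSum2n n ν (i.val+1) else 0,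
      fun _ _ => 0, fun i => if i.val = n-1 then partialSum2n n ν n else 0,
      ?_, ?_, ?_, ?_⟩
    · intro i j
      dsimp only
      split_ifs
      · exact hSnonneg _ (by have := i.isLt; omega)
      · exact le_refl 0
    · intro i j; exact le_refl 0
    · intro i
      dsimp only
      split_ifs
      · exact hSnonneg n (by omega)
      · exact le_refl 0
    · intro k
      exact crux n hn ν hrev k
  · rintro ⟨a, b, d, ha, hb, hd, hdec⟩
    have key : ∀ m, partialSum2n n μ' m - partialSum2n n μ m
        = (∑ i : Fin n, ∑ j : Fin n, if i < j then a i j * partialSum2n n (corootA n i.val j.val) m else 0)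
        + (∑ i : Fin n, ∑ j : Fin n, if i < j then b i j * partialSum2n n (corootB n i.val j.val) m else 0)
        + (∑ i : Fin n, d i * partialSum2n n (corootC n i.val) m) := by
      intro m
      rw [← psum_sub, ← psum_decomp]
      unfold partialSum2n
      exact Finset.sum_congr rfl (fun k _ => hdec k)
    constructor
    · intro m hm
      have h := key m
      have h1 : 0 ≤ (∑ i : Fin n, ∑ j : Fin n, if i < j then a i j * partialSum2n n (corootA n i.val j.val) m else 0) := by
        refine Finset.sum_nonneg (fun i _ => Finset.sum_nonneg (fun j _ => ?_))
        split_ifs with hij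
        · exact mul_nonneg (ha i j) (psum_corootA_nonneg n i.val j.val m (Fin.lt_def.mp hij) j.isLt hm)
        · exact le_refl 0
      have h2 : 0 ≤ (∑ i : Fin n, ∑ j : Fin n, if i < j then b i j * partialSum2n n (corootB n i.val j.val) m else 0) := by
        refine Finset.sum_nonneg (fun i _ => Finset.sum_nonneg (fun j _ => ?_))
        split_ifs with hij
        · exact mul_nonneg (hb i j) (psum_corootB_nonneg n i.val j.val m (Fin.lt_def.mp hij) j.isLt hm)
        · exact le_refl 0
      have h3 : 0 ≤ (∑ i : Fin n, d i * partialSum2n n (corootC n i.val) m) := by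
        refine Finset.sum_nonneg (fun i _ => ?_)
        exact mul_nonneg (hd i) (psum_corootC_nonneg n i.val m i.isLt hm)
      linarith
    · have h := key (2*n)
      have e1 : (∑ i : Fin n, ∑ j : Fin n, if i < j then a i j * partialSum2n n (corootA n i.val j.val) (2*n) else 0) = 0 := by
        refine Finset.sum_eq_zero (fun i _ => Finset.sum_eq_zero (fun j _ => ?_))
        split_ifs with hij
        · rw [psum_corootA_total n i.val j.val (Fin.lt_def.mp hij) j.isLt, mul_zero]
        · rfl
      have e2 : (∑ i : Fin n, ∑ j : Fin n, if i < j then b i j * partialSum2n n (corootB n i.val j.val) (2*n) else 0) = 0 := by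
        refine Finset.sum_eq_zero (fun i _ => Finset.sum_eq_zero (fun j _ => ?_))
        split_ifs with hij
        · rw [psum_corootB_total n i.val j.val (Fin.lt_def.mp hij) j.isLt, mul_zero]
        · rfl
      have e3 : (∑ i : Fin n, d i * partialSum2n n (corootC n i.val) (2*n)) = 0 := by
        refine Finset.sum_eq_zero (fun i _ => ?_)
        rw [psum_corootC_total n i.val i.isLt, mul_zero]
      rw [e1, e2, e3] at h
      linarith
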